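/- For a linear category 𝒞, the trace of its additive closure is isomorphic to the trace of 𝒞: Tr(𝒞^⊕) ≅ Tr(𝒞). -/

import Mathlib

open CategoryTheory
open scoped DirectSum Classical

noncomputable section

/-- The relations `f ≫ g - g ≫ f` defining the trace of a linear category. -/
def traceRelations (C : Type*) [Category C] [Preadditive C] :
    AddSubgroup (⨁ x : C, (x ⟶ x)) :=
  AddSubgroup.closure
    { h | ∃ (x y : C) (f : x ⟶ y) (g : y ⟶ x),
        h = DirectSum.of (fun z : C => z ⟶ z) x (f ≫ g)
          - DirectSum.of (fun z : C => z ⟶ z) y (g ≫ f) }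

/-- The trace of a linear category, `Tr(𝒞) = (⊕_x 𝒞(x,x)) / Span{fg − gf}`. -/
abbrev CatTrace (C : Type*) [Category C] [Preadditive C] :=
  (⨁ x : C, (x ⟶ x)) ⧸ traceRelations C

/-- The class `[f]` of an endomorphism in the trace of the category. -/
def traceClass {C : Type*} [Category C] [Preadditive C] {x : C} (f : x ⟶ x) :
    CatTrace C :=
  QuotientAddGroup.mk (DirectSum.of (fun z : C => z ⟶ z) x f)

section Aux

universe v u

variable {C : Type u} [Category.{v} C] [Preadditive C]

/-- `traceClass` as an additive hom. -/
def traceClassHom (x : C) : (x ⟶ x) →+ CatTrace C :=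
  (QuotientAddGroup.mk' (traceRelations C)).comp (DirectSum.of (fun z : C => z ⟶ z) x)

lemma traceClassHom_apply {x : C} (f : x ⟶ x) : traceClassHom x f = traceClass f := rfl

lemma traceClass_comm {x y : C} (f : x ⟶ y) (g : y ⟶ x) :
    traceClass (f ≫ g) = traceClass (g ≫ f) := by
  refine (QuotientAddGroup.eq (s := traceRelations C)).mpr ?_
  have : (DirectSum.of (fun z : C => z ⟶ z) x (f ≫ g)
      - DirectSum.of (fun z : C => z ⟶ z) y (g ≫ f)) ∈ traceRelations C :=
    AddSubgroup.subset_closure ⟨x, y, f, g, rfl⟩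
  have := neg_mem this
  simpa [neg_sub, sub_eq_neg_add] using this


/-- Inclusion of the `i`-th summand of `X : Mat_ C`. -/
def matInc (X : Mat_ C) (i : X.ι) : (Mat_.embedding C).obj (X.X i) ⟶ X :=
  fun _ j => if h : i = j then eqToHom (congrArg X.X h) else 0

/-- Projection onto the `i`-th summand of `X : Mat_ C`. -/
def matProj (X : Mat_ C) (i : X.ι) : X ⟶ (Mat_.embedding C).obj (X.X i) :=
  fun j _ => if h : j = i then eqToHom (congrArg X.X h) else 0

lemma sum_proj_inc (X : Mat_ C) :
    (∑ i : X.ι, matProj X i ≫ matInc X i) = 𝟙 X := by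
  ext j k
  have : (∑ i : X.ι, matProj X i ≫ matInc X i) j k
      = ∑ i : X.ι, (matProj X i ≫ matInc X i) j k := by
    rw [show ((∑ i : X.ι, matProj X i ≫ matInc X i) j k)
      = (∑ i : X.ι, matProj X i ≫ matInc X i) j k from rfl]
    erw [Finset.sum_apply, Finset.sum_apply]
  rw [this]
  simp [Mat_.comp_apply, matProj, matInc, Mat_.id_apply, dite_comp, comp_dite,
    Finset.sum_dite_eq]
  split_ifs with h
  · subst h
    change ∑ _x : PUnit, (𝟙 (X.X j) ≫ 𝟙 (X.X j)) = 𝟙 _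
    simp
  · rfl

lemma inc_comp_proj (X : Mat_ C) (i : X.ι) (M : X ⟶ X) :
    matInc X i ≫ M ≫ matProj X i = (Mat_.embedding C).map (M i i) := by
  ext ⟨⟩ ⟨⟩
  change ∑ j, matInc X i PUnit.unit j ≫ ∑ k, M j k ≫ matProj X i k PUnit.unit = M i i
  simp [Mat_.comp_apply, matInc, matProj, dite_comp, comp_dite]
  change 𝟙 _ ≫ M i i ≫ 𝟙 _ = M i i
  simp

lemma traceClass_mat (X : Mat_ C) (M : X ⟶ X) :
    traceClass M = ∑ i : X.ι, traceClass ((Mat_.embedding C).map (M i i)) := by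
  have h1 : M = ∑ i : X.ι, M ≫ (matProj X i ≫ matInc X i) := by
    rw [← Preadditive.comp_sum, sum_proj_inc, Category.comp_id]
  calc traceClass M
      = traceClassHom X (∑ i : X.ι, M ≫ (matProj X i ≫ matInc X i)) := by rw [← h1]; rfl
    _ = ∑ i : X.ι, traceClassHom X (M ≫ (matProj X i ≫ matInc X i)) := map_sum _ _ _
    _ = ∑ i : X.ι, traceClass ((Mat_.embedding C).map (M i i)) := by
        refine Finset.sum_congr rfl fun i _ => ?_
        rw [traceClassHom_apply, ← Category.assoc, traceClass_comm, inc_comp_proj]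

/-- Entry extraction as an additive hom. -/
def entryHom (X : Mat_ C) (i : X.ι) : (X ⟶ X) →+ (X.X i ⟶ X.X i) where
  toFun f := f i i
  map_zero' := rfl
  map_add' _ _ := rfl

/-- The map `⊕ Tr-generators of C → Tr(Mat_ C)`. -/
def toMatAux : (⨁ x : C, (x ⟶ x)) →+ CatTrace (Mat_ C) :=
  DirectSum.toAddMonoid fun x =>
    (traceClassHom ((Mat_.embedding C).obj x)).comp (Mat_.embedding C).mapAddHom

/-- The map `⊕ Tr-generators of Mat_ C → Tr(C)`. -/
def ofMatAux : (⨁ X : Mat_ C, (X ⟶ X)) →+ CatTrace C :=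
  DirectSum.toAddMonoid fun X =>
    ∑ i : X.ι, (traceClassHom (X.X i)).comp (entryHom X i)

lemma toMatAux_of {x : C} (f : x ⟶ x) :
    toMatAux (DirectSum.of (fun z : C => z ⟶ z) x f)
      = traceClass ((Mat_.embedding C).map f) := by
  simp [toMatAux, DirectSum.toAddMonoid_of, traceClassHom_apply]

lemma ofMatAux_of {X : Mat_ C} (M : X ⟶ X) :
    ofMatAux (DirectSum.of (fun Z : Mat_ C => Z ⟶ Z) X M)
      = ∑ i : X.ι, traceClass (M i i) := by
  simp [ofMatAux, DirectSum.toAddMonoid_of, AddMonoidHom.finset_sum_apply,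
    entryHom, traceClassHom_apply]
  rfl

lemma toMatAux_rel : traceRelations C ≤ toMatAux.ker := by
  rw [traceRelations, AddSubgroup.closure_le]
  rintro h ⟨x, y, f, g, rfl⟩
  simp only [SetLike.mem_coe, AddMonoidHom.mem_ker, map_sub, toMatAux_of,
    Functor.map_comp]
  rw [traceClass_comm, sub_self]

lemma ofMatAux_rel : traceRelations (Mat_ C) ≤ ofMatAux.ker := by
  rw [traceRelations, AddSubgroup.closure_le]
  rintro h ⟨X, Y, f, g, rfl⟩
  simp only [SetLike.mem_coe, AddMonoidHom.mem_ker, map_sub, ofMatAux_of]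
  rw [sub_eq_zero]
  calc ∑ i : X.ι, traceClass ((f ≫ g) i i)
      = ∑ i : X.ι, ∑ j : Y.ι, traceClass (f i j ≫ g j i) := by
        refine Finset.sum_congr rfl fun i _ => ?_
        rw [Mat_.comp_apply, show traceClass (∑ j : Y.ι, f i j ≫ g j i)
          = traceClassHom (X.X i) (∑ j : Y.ι, f i j ≫ g j i) from rfl, map_sum]
        rfl
    _ = ∑ j : Y.ι, ∑ i : X.ι, traceClass (g j i ≫ f i j) := by
        rw [Finset.sum_comm]
        exact Finset.sum_congr rfl fun j _ => Finset.sum_congr rfl fun i _ =>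
          traceClass_comm _ _
    _ = ∑ j : Y.ι, traceClass ((g ≫ f) j j) := by
        refine Finset.sum_congr rfl fun j _ => ?_
        rw [Mat_.comp_apply, show traceClass (∑ i : X.ι, g j i ≫ f i j)
          = traceClassHom (Y.X j) (∑ i : X.ι, g j i ≫ f i j) from rfl, map_sum]
        rfl

/-- The forward hom `Tr(C) →+ Tr(Mat_ C)`. -/
def toMat : CatTrace C →+ CatTrace (Mat_ C) :=
  QuotientAddGroup.lift _ toMatAux toMatAux_rel

/-- The backward hom `Tr(Mat_ C) →+ Tr(C)`. -/
def ofMat : CatTrace (Mat_ C) →+ CatTrace C :=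
  QuotientAddGroup.lift _ ofMatAux ofMatAux_rel

lemma toMat_traceClass {x : C} (f : x ⟶ x) :
    toMat (traceClass f) = traceClass ((Mat_.embedding C).map f) :=
  toMatAux_of f

lemma ofMat_traceClass {X : Mat_ C} (M : X ⟶ X) :
    ofMat (traceClass M) = ∑ i : X.ι, traceClass (M i i) :=
  ofMatAux_of M

lemma ofMat_toMat (a : CatTrace C) : ofMat (toMat a) = a := by
  induction a using QuotientAddGroup.induction_on with
  | H z =>
    induction z using DirectSum.induction_on with
    | zero => simp
    | of x f =>
      show ofMat (toMat (traceClass f)) = traceClass f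
      rw [toMat_traceClass, ofMat_traceClass]
      change ∑ _i : PUnit, traceClass f = traceClass f
      simp
    | add a b ha hb =>
      rw [show (QuotientAddGroup.mk (a + b) : CatTrace C)
        = QuotientAddGroup.mk a + QuotientAddGroup.mk b from rfl,
        map_add, map_add, ha, hb]

lemma toMat_ofMat (a : CatTrace (Mat_ C)) : toMat (ofMat a) = a := by
  induction a using QuotientAddGroup.induction_on with
  | H z =>
    induction z using DirectSum.induction_on with
    | zero => simp
    | of X M =>
      show toMat (ofMat (traceClass M)) = traceClass M
      rw [ofMat_traceClass, map_sum, traceClass_mat X M]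
      exact Finset.sum_congr rfl fun i _ => toMat_traceClass _
    | add a b ha hb =>
      rw [show (QuotientAddGroup.mk (a + b) : CatTrace (Mat_ C))
        = QuotientAddGroup.mk a + QuotientAddGroup.mk b from rfl,
        map_add, map_add, ha, hb]

end Aux

theorem catTrace_additiveClosure (C : Type) [Category C] [Preadditive C] :
    ∃ e : CatTrace C ≃+ CatTrace (Mat_ C),
      ∀ {x : C} (f : x ⟶ x),
        e (traceClass f) = traceClass ((Mat_.embedding C).map f) := by
  exact ⟨AddEquiv.mk' ⟨toMat, ofMat, ofMat_toMat, toMat_ofMat⟩ (map_add toMat),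
    fun f => toMat_traceClass f⟩
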